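/- Let n ≥ 1, d ≥ 2, and let x : Fin (n(d−1) + 1) → ℂ be injective. For each l, define ψ_l ∈ EuclideanSpace ℂ (Fin n → Fin d) by ψ_l i = (x l) ^ (∑ j, (i j : ℕ)); each ψ_l is fully product (ψ_l i = ∏ j, (x l)^{(i j : ℕ)}). Then the span of {ψ_l : l : Fin (n(d−1)+1)} equals the span of the states {G_n^k : 0 ≤ k ≤ n(d−1)}. -/

import Mathlib

/-- The unnormalized `n`-qudit state `G_n^k`, the uniform superposition of all basis
vectors `|i₁⋯iₙ⟩` with `i₁ + ⋯ + iₙ = k`. -/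
noncomputable def gState (n d k : ℕ) : EuclideanSpace ℂ (Fin n → Fin d) :=
  WithLp.toLp 2 (fun i => if (∑ j, ((i j : ℕ))) = k then 1 else 0)

/-- For injective `x : Fin (n(d−1)+1) → ℂ`, the fully product vectors
`ψ_l i = (x l) ^ (∑ j, i j)` span the same subspace as the states `G_n^k`,
`0 ≤ k ≤ n(d−1)`. -/
theorem span_nUPB_eq_span_gState (n d : ℕ) (hn : 1 ≤ n) (hd : 2 ≤ d)
    (x : Fin (n * (d - 1) + 1) → ℂ) (hx : Function.Injective x)
    (ψ : Fin (n * (d - 1) + 1) → EuclideanSpace ℂ (Fin n → Fin d))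
    (hψ : ∀ l i, ψ l i = (x l) ^ (∑ j, ((i j : ℕ)))) :
    (∀ l i, ψ l i = ∏ j, (x l) ^ ((i j : ℕ))) ∧
    Submodule.span ℂ (Set.range ψ) =
      Submodule.span ℂ {v | ∃ k ≤ n * (d - 1), v = gState n d k} := by
  have hsum : ∀ i : Fin n → Fin d, (∑ j, ((i j : ℕ))) < n * (d - 1) + 1 := by
    intro i
    have h1 : ∑ j, ((i j : ℕ)) ≤ ∑ _j : Fin n, (d - 1) :=
      Finset.sum_le_sum fun j _ => Nat.le_sub_one_of_lt (i j).isLt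
    have h2 : ∑ _j : Fin n, (d - 1) = n * (d - 1) := by
      simp [Finset.sum_const, mul_comm]
    exact Nat.lt_succ_of_le (h2 ▸ h1)
  have hdec : ∀ l, ψ l =
      ∑ k : Fin (n * (d - 1) + 1), (x l) ^ (k : ℕ) • gState n d (k : ℕ) := by
    intro l
    ext i
    have h1 : (∑ k : Fin (n * (d - 1) + 1), (x l) ^ (k : ℕ) • gState n d (k : ℕ)) i
        = ∑ k : Fin (n * (d - 1) + 1), ((x l) ^ (k : ℕ) • gState n d (k : ℕ)) i :=
      by rw [WithLp.ofLp_sum, Finset.sum_apply]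
    have h2 : ∀ k : Fin (n * (d - 1) + 1),
        ((x l) ^ (k : ℕ) • gState n d (k : ℕ)) i
          = (x l) ^ (k : ℕ) * (if (∑ j, ((i j : ℕ))) = (k : ℕ) then 1 else 0) := by
      intro k; rfl
    rw [hψ, h1]
    simp only [h2]
    rw [Finset.sum_eq_single (⟨∑ j, ((i j : ℕ)), hsum i⟩ : Fin (n * (d - 1) + 1))]
    · simp
    · intro b _ hb
      rw [if_neg fun h => hb (Fin.ext h.symm), mul_zero]
    · intro h; exact absurd (Finset.mem_univ _) h
  refine ⟨fun l i => by rw [hψ, ← Finset.prod_pow_eq_pow_sum], ?_⟩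
  have hdet : (Matrix.vandermonde x).det ≠ 0 :=
    (Matrix.det_vandermonde_ne_zero_iff).mpr hx
  have hinv : (Matrix.vandermonde x)⁻¹ * Matrix.vandermonde x = 1 :=
    Matrix.nonsing_inv_mul _ (isUnit_iff_ne_zero.mpr hdet)
  have hG : ∀ k : Fin (n * (d - 1) + 1), gState n d (k : ℕ)
      = ∑ l, ((Matrix.vandermonde x)⁻¹ k l) • ψ l := by
    intro k
    symm
    calc ∑ l, (Matrix.vandermonde x)⁻¹ k l • ψ l
        = ∑ l, ∑ m : Fin (n * (d - 1) + 1),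
            ((Matrix.vandermonde x)⁻¹ k l * Matrix.vandermonde x l m) •
              gState n d (m : ℕ) := by
          refine Finset.sum_congr rfl fun l _ => ?_
          rw [hdec l, Finset.smul_sum]
          exact Finset.sum_congr rfl fun m _ => (smul_smul _ _ _)
      _ = ∑ m : Fin (n * (d - 1) + 1),
            (∑ l, (Matrix.vandermonde x)⁻¹ k l * Matrix.vandermonde x l m) •
              gState n d (m : ℕ) := by
          rw [Finset.sum_comm]
          exact Finset.sum_congr rfl fun m _ => (Finset.sum_smul).symm
      _ = ∑ m : Fin (n * (d - 1) + 1),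
            ((1 : Matrix (Fin (n * (d - 1) + 1)) (Fin (n * (d - 1) + 1)) ℂ) k m) •
              gState n d (m : ℕ) := by
          simp only [← Matrix.mul_apply, hinv]
      _ = gState n d (k : ℕ) := by simp [Matrix.one_apply]
  apply le_antisymm
  · rw [Submodule.span_le]
    rintro _ ⟨l, rfl⟩
    rw [hdec l]
    exact Submodule.sum_mem _ fun k _ => Submodule.smul_mem _ _
      (Submodule.subset_span ⟨(k : ℕ), Nat.lt_succ_iff.mp k.isLt, rfl⟩)
  · rw [Submodule.span_le]
    rintro _ ⟨k, hk, rfl⟩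
    have hk' : k < n * (d - 1) + 1 := Nat.lt_succ_of_le hk
    rw [show gState n d k
        = gState n d ((⟨k, hk'⟩ : Fin (n * (d - 1) + 1)) : ℕ) from rfl, hG]
    exact Submodule.sum_mem _ fun l _ => Submodule.smul_mem _ _
      (Submodule.subset_span ⟨l, rfl⟩)
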